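/- Let n ≥ 2 be an integer, λ a real number, and Θ : (0,∞) → ℝ positive and differentiable with Θ'(r)/Θ(r) = −(1+λ)·cosh r/sinh r for all r > 0. If Θ(r)/r^{n−1} tends to 1 as r → 0⁺, then λ = −n and Θ(r) = (sinh r)^{n−1} for all r > 0. -/

import Mathlib

open Filter Topology

/-- If `Θ > 0` is differentiable on `(0,∞)` with `Θ'/Θ = −(1+λ)·cosh r/sinh r`
and `Θ(r)/r^{n−1} → 1` as `r → 0⁺`, then `λ = −n` and `Θ(r) = (sinh r)^{n−1}`. -/
theorem stmt_7 (n : ℕ) (hn : 2 ≤ n) (lam : ℝ) (Θ : ℝ → ℝ)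
    (hΘpos : ∀ r > 0, 0 < Θ r)
    (hΘdiff : ∀ r > 0, DifferentiableAt ℝ Θ r)
    (hode : ∀ r > 0,
      deriv Θ r / Θ r = -(1 + lam) * Real.cosh r / Real.sinh r)
    (hlim : Tendsto (fun r : ℝ => Θ r / r ^ ((n : ℝ) - 1)) (𝓝[>] 0) (𝓝 1)) :
    lam = -n ∧ ∀ r > 0, Θ r = Real.sinh r ^ ((n : ℝ) - 1) := by
  set m : ℝ := -(1 + lam) with hm_def
  set h : ℝ → ℝ := fun x => Real.log (Θ x) - m * Real.log (Real.sinh x) with hh_def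
  have hH : ∀ r ∈ Set.Ioi (0:ℝ), HasDerivAt h 0 r := by
    intro r hr
    have hr0 : (0:ℝ) < r := hr
    have hs : 0 < Real.sinh r := Real.sinh_pos_iff.2 hr0
    have h1 : HasDerivAt (fun x => Real.log (Θ x)) (deriv Θ r / Θ r) r := by
      have := (Real.hasDerivAt_log (ne_of_gt (hΘpos r hr0))).comp r
        ((hΘdiff r hr0).hasDerivAt)
      simpa [div_eq_inv_mul, Function.comp_def] using this
    have h2 : HasDerivAt (fun x => Real.log (Real.sinh x)) (Real.cosh r / Real.sinh r) r := by
      have := (Real.hasDerivAt_log (ne_of_gt hs)).comp r (Real.hasDerivAt_sinh r)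
      simpa [div_eq_inv_mul, Function.comp_def] using this
    have h3 := h1.sub (h2.const_mul m)
    have e : deriv Θ r / Θ r - m * (Real.cosh r / Real.sinh r) = 0 := by
      rw [hode r hr0, hm_def]; ring
    rw [e] at h3
    exact h3
  have hconst : ∀ r > 0, h r = h 1 := by
    intro r hr
    have hconv : Convex ℝ (Set.Ioi (0:ℝ)) := convex_Ioi 0
    have hdiff : DifferentiableOn ℝ h (Set.Ioi 0) := fun x hx =>
      ((hH x hx).differentiableAt).differentiableWithinAt
    have hfd : ∀ x ∈ Set.Ioi (0:ℝ), fderivWithin ℝ h (Set.Ioi 0) x = 0 := by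
      intro x hx
      rw [fderivWithin_of_isOpen isOpen_Ioi hx, (hH x hx).hasFDerivAt.fderiv]
      ext y
      simp
    exact hconv.is_const_of_fderivWithin_eq_zero hdiff hfd (Set.mem_Ioi.2 hr)
      (Set.mem_Ioi.2 one_pos)
  set c : ℝ := h 1 with hc_def
  have hΘeq : ∀ r > 0, Θ r = Real.exp c * Real.sinh r ^ m := by
    intro r hr
    have hs : 0 < Real.sinh r := Real.sinh_pos_iff.2 hr
    have h1 : Real.log (Θ r) = c + m * Real.log (Real.sinh r) := by
      have := hconst r hr; simp only [hh_def] at this; linarith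
    have h2 := congrArg Real.exp h1
    rw [Real.exp_log (hΘpos r hr)] at h2
    rw [h2, Real.exp_add, Real.rpow_def_of_pos hs, mul_comm m]
  set d : ℝ := m - ((n : ℝ) - 1) with hd_def
  -- sinh r / r → 1
  have hsr : Tendsto (fun r : ℝ => Real.sinh r / r) (𝓝[>] 0) (𝓝 1) := by
    have h0 : HasDerivAt Real.sinh 1 0 := by
      simpa using Real.hasDerivAt_sinh 0
    have := hasDerivAt_iff_tendsto_slope.1 h0
    have h1 : Tendsto (slope Real.sinh 0) (𝓝[>] 0) (𝓝 1) :=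
      this.mono_left (nhdsWithin_mono _ fun x hx => ne_of_gt hx)
    refine h1.congr' ?_
    filter_upwards [self_mem_nhdsWithin] with r hr
    simp [slope_def_field]
  have hsrm : Tendsto (fun r : ℝ => (Real.sinh r / r) ^ m) (𝓝[>] 0) (𝓝 1) := by
    have hcont : ContinuousAt (fun x : ℝ => x ^ m) 1 :=
      Real.continuousAt_rpow_const 1 m (Or.inl one_ne_zero)
    have := hcont.tendsto.comp hsr
    simpa [Function.comp_def] using this
  -- exp c * r ^ d → 1
  have key : Tendsto (fun r : ℝ => Real.exp c * r ^ d) (𝓝[>] 0) (𝓝 1) := by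
    have hdiv := hlim.div hsrm one_ne_zero
    simp only [div_one] at hdiv
    refine hdiv.congr' ?_
    filter_upwards [self_mem_nhdsWithin] with r hr
    have hr0 : (0:ℝ) < r := hr
    have hs : 0 < Real.sinh r := Real.sinh_pos_iff.2 hr0
    simp only [Pi.div_apply]
    rw [hΘeq r hr0, Real.div_rpow hs.le hr0.le,
      show r ^ d = r ^ m / r ^ ((n:ℝ) - 1) from Real.rpow_sub hr0 m ((n:ℝ)-1)]
    have h1 : r ^ ((n:ℝ) - 1) ≠ 0 := (Real.rpow_pos_of_pos hr0 _).ne'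
    have h2 : r ^ m ≠ 0 := (Real.rpow_pos_of_pos hr0 _).ne'
    have h3 : Real.sinh r ^ m ≠ 0 := (Real.rpow_pos_of_pos hs _).ne'
    have key : ∀ E S A R : ℝ, A ≠ 0 → R ≠ 0 → S ≠ 0 →
        E * S / A / (S / R) = E * (R / A) := by
      intro E S A R hA hR hS; field_simp
    exact key _ _ _ _ h1 h2 h3
  -- take logs
  have hlog : Tendsto (fun r : ℝ => c + d * Real.log r) (𝓝[>] 0) (𝓝 0) := by
    have hcont : ContinuousAt Real.log 1 := Real.continuousAt_log one_ne_zero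
    have := hcont.tendsto.comp key
    rw [Real.log_one] at this
    refine this.congr' ?_
    filter_upwards [self_mem_nhdsWithin] with r hr
    have hr0 : (0:ℝ) < r := hr
    simp only [Function.comp_apply, Function.comp]
    rw [Real.log_mul (Real.exp_ne_zero c) (Real.rpow_pos_of_pos hr0 d).ne',
      Real.log_exp, Real.log_rpow hr0]
  have hd0 : d = 0 := by
    by_contra hd
    rcases lt_or_gt_of_ne hd with hneg | hpos
    · have h1 : Tendsto (fun r : ℝ => d * Real.log r) (𝓝[>] 0) atTop :=
        (Real.tendsto_log_nhdsGT_zero).const_mul_atBot_of_neg hneg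
      have h2 : Tendsto (fun r : ℝ => c + d * Real.log r) (𝓝[>] 0) atTop :=
        tendsto_atTop_add_const_left _ c h1
      exact not_tendsto_nhds_of_tendsto_atTop h2 0 hlog
    · have h1 : Tendsto (fun r : ℝ => d * Real.log r) (𝓝[>] 0) atBot :=
        (Real.tendsto_log_nhdsGT_zero).const_mul_atBot hpos
      have h2 : Tendsto (fun r : ℝ => c + d * Real.log r) (𝓝[>] 0) atBot :=
        tendsto_atBot_add_const_left _ c h1
      exact not_tendsto_nhds_of_tendsto_atBot h2 0 hlog
  have hc0 : c = 0 := by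
    have : Tendsto (fun _ : ℝ => c) (𝓝[>] (0:ℝ)) (𝓝 0) := by
      refine hlog.congr' ?_
      filter_upwards with r
      rw [hd0]; ring
    exact tendsto_nhds_unique tendsto_const_nhds this
  have hm_eq : m = (n : ℝ) - 1 := by
    have : d = 0 := hd0
    rw [hd_def] at this; linarith
  constructor
  · rw [hm_def] at hm_eq; linarith
  · intro r hr
    rw [hΘeq r hr, hc0, Real.exp_zero, one_mul, hm_eq]
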